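/- Let G = (V,E) be a simple graph and k a positive integer. Then G contains a clique on k vertices if and only if, in the subdivision-graph facility-interdiction instance (facilities V, unit-weight subdivision customers), there exists a set R ⊆ V with |R| = k whose deletion disconnects exactly k(k−1)/2 customers from all remaining facilities. -/

import Mathlib

/-- The subdivision graph of G: vertices V ⊕ E(G), with the subdivision vertex
of an edge joined to its two endpoints. -/
def subdivisionGraph {V : Type*} (G : SimpleGraph V) :
    SimpleGraph (V ⊕ G.edgeSet) :=
  SimpleGraph.fromRel (fun x y => ∃ (a : V) (e : G.edgeSet),
    x = Sum.inl a ∧ y = Sum.inr e ∧ a ∈ (e : Sym2 V))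

open SimpleGraph


lemma adj_inr {V : Type*} (G : SimpleGraph V) {e : G.edgeSet} {y : V ⊕ G.edgeSet}
    (h : (subdivisionGraph G).Adj (Sum.inr e) y) :
    ∃ b : V, y = Sum.inl b ∧ b ∈ (e : Sym2 V) := by
  rw [subdivisionGraph, SimpleGraph.fromRel_adj] at h
  obtain ⟨hne, h | h⟩ := h
  · obtain ⟨a, e', h1, -⟩ := h; exact absurd h1 (by simp)
  · obtain ⟨a, e', h1, h2, h3⟩ := h
    cases Sum.inr.inj h2
    exact ⟨a, h1, h3⟩

lemma adj_inl_inr {V : Type*} (G : SimpleGraph V) {e : G.edgeSet} {a : V}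
    (ha : a ∈ (e : Sym2 V)) :
    (subdivisionGraph G).Adj (Sum.inr e) (Sum.inl a) := by
  rw [subdivisionGraph, SimpleGraph.fromRel_adj]
  exact ⟨by simp, Or.inr ⟨a, e, rfl, rfl, ha⟩⟩

lemma discSet_eq {V : Type*} (G : SimpleGraph V) (R : Set V) :
    {e : G.edgeSet | ¬ ∃ a : V, a ∉ R ∧
        ∃ p : (subdivisionGraph G).Walk (Sum.inr e) (Sum.inl a),
          ∀ x ∈ p.support, ∀ b : V, x = Sum.inl b → b ∉ R}
      = {e : G.edgeSet | ∀ a ∈ (e : Sym2 V), a ∈ R} := by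
  ext e
  simp only [Set.mem_setOf_eq]
  constructor
  · intro h a ha
    by_contra haR
    refine h ⟨a, haR, Walk.cons (adj_inl_inr G ha) Walk.nil, ?_⟩
    intro x hx b hxb
    simp only [Walk.support_cons, Walk.support_nil, List.mem_cons,
      List.mem_singleton] at hx
    rcases hx with rfl | rfl | h'
    · exact absurd hxb (by simp)
    · cases Sum.inl.inj hxb; exact haR
    · exact absurd h' List.not_mem_nil
  · rintro h ⟨a, haR, p, hp⟩
    cases p with
    | cons h' q =>
      obtain ⟨b, rfl, hbe⟩ := adj_inr G h'
      exact hp (Sum.inl b)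
        (by simp [Walk.support_cons, q.start_mem_support]) b rfl (h b hbe)

lemma offdiag_card {V : Type*} [DecidableEq V] (t : Finset V) :
    (t.sym2.filter fun s => ¬ s.IsDiag).card = t.card * (t.card - 1) / 2 := by
  have hdiag : t.sym2.filter (fun s => s.IsDiag) = t.image Sym2.diag := by
    ext s
    induction s using Sym2.ind with
    | _ x y =>
      simp only [Finset.mem_filter, Finset.mk_mem_sym2_iff, Sym2.mk_isDiag_iff,
        Finset.mem_image, Sym2.diag]
      constructor
      · rintro ⟨⟨hx, -⟩, rfl⟩; exact ⟨x, hx, rfl⟩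
      · rintro ⟨a, ha, h⟩
        rw [Sym2.eq_iff] at h
        obtain ⟨rfl, rfl⟩ | ⟨rfl, rfl⟩ := h <;> exact ⟨⟨ha, ha⟩, rfl⟩
  have hsum := Finset.card_filter_add_card_filter_not
    (s := t.sym2) (p := fun s => s.IsDiag)
  rw [hdiag, Finset.card_image_of_injective _ Sym2.diag_injective,
    Finset.card_sym2] at hsum
  set n := t.card with hn
  have hchoose : (n + 1).choose 2 = (n+1) * n / 2 := by
    rw [Nat.choose_two_right]; simp
  clear_value n
  rcases n with _ | m
  · simpa using hsum
  have e1 : (m + 1 + 1) * (m + 1) = (m + 1) * m + 2 * (m + 1) := by ring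
  have e2 : 2 ∣ (m + 1) * m := by
    simpa [Nat.mul_comm] using (Nat.even_mul_succ_self m).two_dvd
  simp only [Nat.add_sub_cancel]
  omega

lemma ncard_transfer {V : Type*} (G : SimpleGraph V) (R : Set V) :
    {e : G.edgeSet | ∀ a ∈ (e : Sym2 V), a ∈ R}.ncard
      = {s : Sym2 V | s ∈ G.edgeSet ∧ ∀ a ∈ s, a ∈ R}.ncard := by
  rw [← Set.ncard_image_of_injective _ (Subtype.val_injective
    (p := fun s => s ∈ G.edgeSet))]
  congr 1
  ext s
  simp only [Set.mem_image, Set.mem_setOf_eq]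
  constructor
  · rintro ⟨e, he, rfl⟩; exact ⟨e.2, he⟩
  · rintro ⟨hs, h⟩; exact ⟨⟨s, hs⟩, h, rfl⟩


/-- G has a clique on k vertices iff in the subdivision-graph
facility-interdiction instance there is a set R of k facilities whose deletion
disconnects exactly k(k−1)/2 of the unit-weight subdivision customers. -/
theorem stmt8 {V : Type*} [Fintype V] [DecidableEq V] (G : SimpleGraph V)
    (k : ℕ) (hk : 0 < k) :
    (∃ t : Finset V, G.IsNClique k t) ↔
      ∃ R : Set V, R.ncard = k ∧
        {e : G.edgeSet | ¬ ∃ a : V, a ∉ R ∧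
            ∃ p : (subdivisionGraph G).Walk (Sum.inr e) (Sum.inl a),
              ∀ x ∈ p.support, ∀ b : V, x = Sum.inl b → b ∉ R}.ncard =
          k * (k - 1) / 2 := by
  constructor
  · rintro ⟨t, ht⟩
    refine ⟨↑t, by simp [Set.ncard_coe_finset, ht.2], ?_⟩
    rw [discSet_eq, ncard_transfer]
    have hset : {s : Sym2 V | s ∈ G.edgeSet ∧ ∀ a ∈ s, a ∈ (↑t : Set V)}
        = ↑(t.sym2.filter fun s => ¬ s.IsDiag) := by
      ext s
      induction s using Sym2.ind with
      | _ x y =>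
        simp only [Set.mem_setOf_eq, SimpleGraph.mem_edgeSet, Sym2.mem_iff,
          Finset.coe_filter, Finset.mk_mem_sym2_iff, Sym2.mk_isDiag_iff,
          Finset.mem_coe, Set.mem_setOf_eq]
        constructor
        · rintro ⟨hadj, h⟩
          exact ⟨⟨h x (Or.inl rfl), h y (Or.inr rfl)⟩, hadj.ne⟩
        · rintro ⟨⟨hx, hy⟩, hne⟩
          exact ⟨ht.1 hx hy hne, by rintro a (rfl | rfl) <;> assumption⟩
    rw [hset, Set.ncard_coe_finset, offdiag_card, ht.2]
  · rintro ⟨R, hR, hcard⟩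
    rw [discSet_eq, ncard_transfer] at hcard
    have hRfin : R.Finite := Set.toFinite R
    set t := hRfin.toFinset with htdef
    have htcard : t.card = k := by
      rw [← hR, Set.ncard_eq_toFinset_card R hRfin]
    have hsub : {s : Sym2 V | s ∈ G.edgeSet ∧ ∀ a ∈ s, a ∈ R}
        ⊆ ↑(t.sym2.filter fun s => ¬ s.IsDiag) := by
      rintro s ⟨hs, h⟩
      simp only [Finset.coe_filter, Set.mem_setOf_eq, Finset.mem_sym2_iff]
      exact ⟨fun a ha => by simpa [htdef] using h a ha,
        G.not_isDiag_of_mem_edgeSet hs⟩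
    have heq : {s : Sym2 V | s ∈ G.edgeSet ∧ ∀ a ∈ s, a ∈ R}
        = ↑(t.sym2.filter fun s => ¬ s.IsDiag) := by
      exact Set.eq_of_subset_of_ncard_le hsub
        (by rw [Set.ncard_coe_finset, offdiag_card, htcard, hcard])
        ((t.sym2.filter fun s => ¬ s.IsDiag).finite_toSet)
    refine ⟨t, ?_, htcard⟩
    intro a ha b hb hab
    have : s(a, b) ∈ {s : Sym2 V | s ∈ G.edgeSet ∧ ∀ a ∈ s, a ∈ R} := by
      rw [heq]
      simp only [Finset.coe_filter, Set.mem_setOf_eq, Finset.mk_mem_sym2_iff,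
        Sym2.mk_isDiag_iff]
      exact ⟨⟨ha, hb⟩, hab⟩
    exact this.1
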